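/- arXiv:1101.3627 — 2 statements merged into one kernel-verified Lean document; each statement's English description precedes it below -/
import Mathlib

section
/- Let S ⊆ E^n with 0̄ ∈ S, a = χ^S, and suppose there exists k such that B'_i(a) = 0 for every i ∉ {0, k}. Then χ^S is a perfect 2-coloring of E^n (i.e., there exists a matrix of parameters for which χ^S is a perfect coloring). -/
open Finset

/-- Weight of a vector in the Boolean cube: the number of ones. -/
def wt {n : ℕ} (y : Fin n → Bool) : ℕ := (Finset.univ.filter fun i => y i = true).card

/-- The face `E^n_y(z) = {x : [x,y] = [z,y]}`: all `x` agreeing with `z` on the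
support of `y`. -/
def face {n : ℕ} (y z : Fin n → Bool) : Finset (Fin n → Bool) :=
  Finset.univ.filter fun x => ∀ i, y i = true → x i = z i

/-- `χ^S` is correlation-immune of order `k`: all faces obtained by fixing `k`
coordinates (i.e. faces `E^n_y(z)` with `wt y = k`) intersect `S` in the same
cardinality. -/
def CorrImmune {n : ℕ} (S : Finset (Fin n → Bool)) (k : ℕ) : Prop :=
  ∀ y₁ z₁ y₂ z₂ : Fin n → Bool, wt y₁ = k → wt y₂ = k →
    (face y₁ z₁ ∩ S).card = (face y₂ z₂ ∩ S).card

/-- `cor S` : the maximum order of correlation immunity of `χ^S`. -/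
noncomputable def cor {n : ℕ} (S : Finset (Fin n → Bool)) : ℕ :=
  sSup {k | k ≤ n ∧ CorrImmune S k}

/-- Density `ρ(S) = |S| / 2^n`. -/
def rho {n : ℕ} (S : Finset (Fin n → Bool)) : ℚ := (S.card : ℚ) / 2 ^ n

/-- `nei S`: the average number of neighbors in `S` of vertices of `S`,
`(1/|S|) ∑_{x∈S} |B(x) ∩ S| - 1`, where `B x` is the Hamming ball of radius 1. -/
def nei {n : ℕ} (S : Finset (Fin n → Bool)) : ℚ :=
  (∑ x ∈ S, ((S.filter fun y => hammingDist x y ≤ 1).card : ℚ)) / (S.card : ℚ) - 1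

/-- Characteristic function of `S`, as a rational-valued function. -/
def chi {n : ℕ} (S : Finset (Fin n → Bool)) (x : Fin n → Bool) : ℚ := if x ∈ S then 1 else 0

/-- Characteristic function of `S` as a 2-coloring (color 1 = membership in `S`). -/
def chiCol {n : ℕ} (S : Finset (Fin n → Bool)) (x : Fin n → Bool) : Fin 2 :=
  if x ∈ S then 1 else 0

/-- `Col` is a perfect coloring with parameter matrix `A`: every vertex of color `i`
has exactly `A i j` neighbors (at Hamming distance 1) of color `j`. -/
def IsPerfectColoring {n : ℕ} (Col : (Fin n → Bool) → Fin 2) (A : Fin 2 → Fin 2 → ℕ) : Prop :=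
  ∀ x : Fin n → Bool, ∀ j : Fin 2,
    (Finset.univ.filter fun y => hammingDist x y = 1 ∧ Col y = j).card = A (Col x) j

/-- Fourier transform `â(v) = ∑_u a(u) (-1)^{⟨u,v⟩}`. -/
def fourierT {n : ℕ} (a : (Fin n → Bool) → ℚ) (v : Fin n → Bool) : ℚ :=
  ∑ u : Fin n → Bool, a u * (-1) ^ ((Finset.univ.filter fun i => u i = true ∧ v i = true).card)

/-- Coordinatewise XOR. -/
def xorv {n : ℕ} (u v : Fin n → Bool) : Fin n → Bool := fun i => xor (u i) (v i)

/-- Weight distribution `B_i(a) = (1/|S|) |{(u,v) ∈ S×S : wt(u⊕v) = i}|`. -/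
def Bdist {n : ℕ} (S : Finset (Fin n → Bool)) (i : ℕ) : ℚ :=
  (((S ×ˢ S).filter fun p => wt (xorv p.1 p.2) = i).card : ℚ) / (S.card : ℚ)

/-- Kravchuk polynomial `P_k(i) = ∑_{j=0}^k (-1)^j C(i,j) C(n-i,k-j)`. -/
def krav (n k i : ℕ) : ℚ :=
  ∑ j ∈ Finset.range (k + 1),
    (-1 : ℚ) ^ j * (Nat.choose i j : ℚ) * (Nat.choose (n - i) (k - j) : ℚ)

/-- MacWilliams transform `B'_k(a) = (1/|S|) ∑_{i=0}^n B_i(a) P_k(i)`. -/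
def Bmw {n : ℕ} (S : Finset (Fin n → Bool)) (k : ℕ) : ℚ :=
  (∑ i ∈ Finset.range (n + 1), Bdist S i * krav n k i) / (S.card : ℚ)

namespace Aux15
variable {n : ℕ}

variable {n : ℕ}

def zerov (n : ℕ) : Fin n → Bool := fun _ => false

def chr (u v : Fin n → Bool) : ℚ :=
  (-1) ^ ((Finset.univ.filter fun i => u i = true ∧ v i = true).card)

lemma chr_eq_prod (u v : Fin n → Bool) :
    chr u v = ∏ i, (if u i = true ∧ v i = true then (-1 : ℚ) else 1) := by
  rw [chr, ← Finset.prod_const, Finset.prod_filter]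

lemma chr_comm (u v : Fin n → Bool) : chr u v = chr v u := by
  rw [chr, chr]
  congr 2
  ext i
  simp [and_comm]

lemma chr_mul (u v t : Fin n → Bool) : chr u t * chr v t = chr (xorv u v) t := by
  rw [chr_eq_prod, chr_eq_prod, chr_eq_prod, ← Finset.prod_mul_distrib]
  refine Finset.prod_congr rfl fun i _ => ?_
  rcases Bool.eq_false_or_eq_true (u i) with h1 | h1 <;>
    rcases Bool.eq_false_or_eq_true (v i) with h2 | h2 <;>
      rcases Bool.eq_false_or_eq_true (t i) with h3 | h3 <;>
        simp [xorv, h1, h2, h3]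

lemma chr_zero_right (u : Fin n → Bool) : chr u (zerov n) = 1 := by
  rw [chr]
  have : (Finset.univ.filter fun i => u i = true ∧ zerov n i = true) = ∅ := by
    ext i; simp [zerov]
  rw [this]; simp

lemma chr_zero_left (v : Fin n → Bool) : chr (zerov n) v = 1 := by
  rw [chr_comm, chr_zero_right]

lemma chr_ne_zero (u v : Fin n → Bool) : chr u v ≠ 0 := by
  rw [chr]; positivity


variable {n : ℕ}
def ev (i : Fin n) : Fin n → Bool := fun j => decide (j = i)
def flipv (x : Fin n → Bool) (i : Fin n) : Fin n → Bool := fun j => if j = i then !x j else x j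
lemma chr_mul_right (w t s : Fin n → Bool) : chr w t * chr w s = chr w (xorv t s) := by
  rw [chr_comm w t, chr_comm w s, chr_comm w (xorv t s)]; exact chr_mul t s w

lemma xorv_ev (x : Fin n → Bool) (i : Fin n) : xorv x (ev i) = flipv x i := by
  funext j
  by_cases h : j = i <;> simp [xorv, ev, flipv, h]

lemma chr_ev (w : Fin n → Bool) (i : Fin n) :
    chr w (ev i) = if w i = true then (-1 : ℚ) else 1 := by
  rw [chr]
  have : (Finset.univ.filter fun j => w j = true ∧ ev i j = true)
      = if w i = true then {i} else ∅ := by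
    by_cases h : w i = true
    · rw [if_pos h]; ext j
      simp only [mem_filter, mem_univ, true_and, mem_singleton, ev, decide_eq_true_eq]
      constructor
      · rintro ⟨_, rfl⟩; rfl
      · rintro rfl; exact ⟨h, rfl⟩
    · rw [if_neg h]; ext j
      simp only [mem_filter, mem_univ, true_and, notMem_empty, iff_false, not_and, ev,
        decide_eq_true_eq]
      rintro hw rfl; exact h hw
  rw [this]
  by_cases h : w i = true <;> simp [h]

lemma wt_eq_zero_iff (t : Fin n → Bool) : wt t = 0 ↔ t = zerov n := by
  rw [wt, Finset.card_eq_zero, Finset.filter_eq_empty_iff]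
  constructor
  · intro h
    funext i
    have := h (Finset.mem_univ i)
    simp only [Bool.not_eq_true] at this
    simp [this, zerov]
  · intro h i _
    subst h
    simp [zerov]

lemma sum_chr (w : Fin n → Bool) :
    ∑ t : Fin n → Bool, chr w t = if w = zerov n then (2 ^ n : ℚ) else 0 := by
  by_cases h : w = zerov n
  · subst h
    rw [if_pos rfl]
    have : ∀ t : Fin n → Bool, chr (zerov n) t = 1 := fun t => by
      rw [chr_comm]; exact chr_zero_right t
    simp only [this, Finset.sum_const, Finset.card_univ, Fintype.card_fun, Fintype.card_bool,
      Fintype.card_fin, nsmul_eq_mul, mul_one]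
    push_cast; ring
  · rw [if_neg h]
    obtain ⟨i0, hi0⟩ : ∃ i, w i = true := by
      by_contra hc
      push_neg at hc
      exact h (funext fun i => by simpa [zerov] using hc i)
    refine Finset.sum_involution (fun t _ => flipv t i0) ?_ ?_ (fun _ _ => Finset.mem_univ _) ?_
    · intro t _
      have : chr w (flipv t i0) = chr w t * chr w (ev i0) := by
        rw [chr_mul_right, xorv_ev]
      rw [this, chr_ev, if_pos hi0]
      ring
    · intro t _ _
      intro he
      have := congrFun he i0
      simp [flipv] at this
    · intro t _
      funext j
      by_cases hj : j = i0 <;> simp [flipv, hj]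
variable {n : ℕ}

lemma card_fiber (w : Fin n → Bool) (K j : ℕ) (hj : j ≤ K) :
    (Finset.univ.filter fun t : Fin n → Bool => wt t = K ∧
      (Finset.univ.filter fun i => w i = true ∧ t i = true).card = j).card
    = (wt w).choose j * (n - wt w).choose (K - j) := by
  classical
  set W : Finset (Fin n) := Finset.univ.filter fun i => w i = true with hW
  have hWcard : W.card = wt w := rfl
  have hWccard : (Finset.univ \ W).card = n - wt w := by
    rw [Finset.card_sdiff_of_subset (Finset.subset_univ W), Finset.card_univ, Fintype.card_fin, hWcard]
  rw [← hWcard] at hWccard ⊢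
  rw [← hWccard, ← Finset.card_powersetCard, ← Finset.card_powersetCard,
    ← Finset.card_product]
  apply Finset.card_nbij'
    (i := fun t => (((Finset.univ.filter fun i => t i = true) ∩ W),
                    ((Finset.univ.filter fun i => t i = true) \ W)))
    (j := fun P => fun i => decide (i ∈ P.1 ∪ P.2))
  · intro t ht
    simp only [Finset.mem_coe, Finset.mem_filter, Finset.mem_univ, true_and] at ht
    obtain ⟨hwt, hip⟩ := ht
    have hinter : (Finset.univ.filter fun i => t i = true) ∩ W
        = Finset.univ.filter fun i => w i = true ∧ t i = true := by
      ext i; simp [hW]; tauto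
    simp only [Finset.mem_coe, Finset.mem_product, Finset.mem_powersetCard]
    refine ⟨⟨Finset.inter_subset_right, ?_⟩, ⟨?_, ?_⟩⟩
    · rw [hinter, hip]
    · exact Finset.sdiff_subset_sdiff (Finset.subset_univ _) le_rfl
    · have h1 : ((Finset.univ.filter fun i => t i = true) \ W).card
          + ((Finset.univ.filter fun i => t i = true) ∩ W).card
          = (Finset.univ.filter fun i => t i = true).card :=
        Finset.card_sdiff_add_card_inter _ _
      rw [hinter, hip] at h1
      have : (Finset.univ.filter fun i => t i = true).card = K := hwt
      omega
  · rintro ⟨P, Q⟩ hPQ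
    simp only [Finset.mem_coe, Finset.mem_product, Finset.mem_powersetCard] at hPQ
    obtain ⟨⟨hPW, hPc⟩, hQW, hQc⟩ := hPQ
    have hsupp : (Finset.univ.filter fun i => decide (i ∈ P ∪ Q) = true) = P ∪ Q := by
      ext i; simp
    have hdisj : Disjoint P Q := by
      rw [Finset.disjoint_left]
      intro a haP haQ
      exact (Finset.mem_sdiff.mp (hQW haQ)).2 (hPW haP)
    have hPU : (P ∪ Q) ∩ W = P := by
      ext i
      simp only [Finset.mem_inter, Finset.mem_union]
      constructor
      · rintro ⟨hiPQ | hiQ, hiW⟩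
        · exact hiPQ
        · exact absurd hiW (Finset.mem_sdiff.mp (hQW hiQ)).2
      · intro hiP; exact ⟨Or.inl hiP, hPW hiP⟩
    simp only [Finset.mem_coe, Finset.mem_filter, Finset.mem_univ, true_and]
    constructor
    · show (Finset.univ.filter fun i => decide (i ∈ P ∪ Q) = true).card = K
      rw [hsupp, Finset.card_union_of_disjoint hdisj, hPc, hQc]
      omega
    · have : (Finset.univ.filter fun i => w i = true ∧ decide (i ∈ P ∪ Q) = true)
          = (P ∪ Q) ∩ W := by
        ext i; simp [hW, and_comm]
      rw [this, hPU, hPc]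
  · intro t _
    funext i
    have : ((Finset.univ.filter fun i => t i = true) ∩ W)
        ∪ ((Finset.univ.filter fun i => t i = true) \ W)
        = Finset.univ.filter fun i => t i = true := by
      ext a; simp only [Finset.mem_union, Finset.mem_inter, Finset.mem_sdiff]; tauto
    beta_reduce
    rw [this]
    simp only [Finset.mem_filter, Finset.mem_univ, true_and]
    cases h : t i <;> simp [h]
  · rintro ⟨P, Q⟩ hPQ
    simp only [Finset.mem_coe, Finset.mem_product, Finset.mem_powersetCard] at hPQ
    obtain ⟨⟨hPW, hPc⟩, hQW, hQc⟩ := hPQ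
    have hsupp : (Finset.univ.filter fun i => decide (i ∈ P ∪ Q) = true) = P ∪ Q := by
      ext i; simp
    have hPU : (P ∪ Q) ∩ W = P := by
      ext i
      simp only [Finset.mem_inter, Finset.mem_union]
      constructor
      · rintro ⟨hiPQ | hiQ, hiW⟩
        · exact hiPQ
        · exact absurd hiW (Finset.mem_sdiff.mp (hQW hiQ)).2
      · intro hiP; exact ⟨Or.inl hiP, hPW hiP⟩
    have hQU : (P ∪ Q) \ W = Q := by
      ext i
      simp only [Finset.mem_sdiff, Finset.mem_union]
      constructor
      · rintro ⟨hiPQ | hiQ, hiW⟩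
        · exact absurd (hPW hiPQ) hiW
        · exact hiQ
      · intro hiQ
        exact ⟨Or.inr hiQ, (Finset.mem_sdiff.mp (hQW hiQ)).2⟩
    simp only [Prod.mk.injEq]
    rw [hsupp]
    exact ⟨hPU, hQU⟩

lemma krav_eq (K : ℕ) (w : Fin n → Bool) :
    krav n K (wt w) = ∑ t ∈ Finset.univ.filter (fun t : Fin n → Bool => wt t = K), chr w t := by
  classical
  rw [← Finset.sum_fiberwise_of_maps_to
      (g := fun t : Fin n → Bool => (Finset.univ.filter fun i => w i = true ∧ t i = true).card)
      (t := Finset.range (K + 1))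
      (fun t ht => by
        simp only [Finset.mem_filter, Finset.mem_univ, true_and] at ht
        rw [Finset.mem_range, Nat.lt_succ_iff, ← ht]
        refine Finset.card_le_card ?_
        intro i hi
        simp only [Finset.mem_filter] at hi ⊢
        tauto ) (fun t => chr w t)]
  rw [krav]
  refine Finset.sum_congr rfl fun j hj => ?_
  rw [Finset.mem_range, Nat.lt_succ_iff] at hj
  have hconst : ∀ t ∈ (Finset.univ.filter fun t : Fin n → Bool => wt t = K).filter
      (fun t => (Finset.univ.filter fun i => w i = true ∧ t i = true).card = j),
      chr w t = (-1 : ℚ) ^ j := by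
    intro t ht
    simp only [Finset.mem_filter] at ht
    rw [chr, ht.2]
  rw [Finset.sum_congr rfl hconst, Finset.sum_const, Finset.filter_filter, card_fiber w K j hj]
  simp only [nsmul_eq_mul]
  push_cast
  ring
variable {n : ℕ}
def ahat (S : Finset (Fin n → Bool)) (t : Fin n → Bool) : ℚ := ∑ u ∈ S, chr u t

lemma xorv_eq_zero_iff (u x : Fin n → Bool) : xorv u x = zerov n ↔ u = x := by
  constructor
  · intro h
    funext i
    have := congrFun h i
    simp only [xorv, zerov] at this
    cases h1 : u i <;> cases h2 : x i <;> simp [h1, h2] at this ⊢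
  · rintro rfl
    funext i
    simp [xorv, zerov]

lemma ahat_zero (S : Finset (Fin n → Bool)) : ahat S (zerov n) = S.card := by
  rw [ahat]
  rw [Finset.sum_congr rfl fun u _ => chr_zero_right u]
  simp

lemma inversion (S : Finset (Fin n → Bool)) (x : Fin n → Bool) :
    ∑ t : Fin n → Bool, ahat S t * chr x t = if x ∈ S then (2 ^ n : ℚ) else 0 := by
  simp only [ahat, Finset.sum_mul]
  rw [Finset.sum_comm]
  have : ∀ u ∈ S, ∑ t : Fin n → Bool, chr u t * chr x t
      = if u = x then (2 ^ n : ℚ) else 0 := by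
    intro u _
    calc ∑ t : Fin n → Bool, chr u t * chr x t
        = ∑ t : Fin n → Bool, chr (xorv u x) t := by
          exact Finset.sum_congr rfl fun t _ => chr_mul u x t
      _ = if xorv u x = zerov n then (2 ^ n : ℚ) else 0 := sum_chr _
      _ = if u = x then (2 ^ n : ℚ) else 0 := by simp only [xorv_eq_zero_iff]
  rw [Finset.sum_congr rfl this, Finset.sum_ite_eq' S x (fun _ => (2 ^ n : ℚ))]

lemma wt_le (t : Fin n → Bool) : wt t ≤ n := by
  rw [wt]
  calc (Finset.univ.filter fun i => t i = true).card ≤ Finset.univ.card :=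
        Finset.card_filter_le _ _
    _ = n := by rw [Finset.card_univ, Fintype.card_fin]

lemma Bmw_eq (S : Finset (Fin n → Bool)) (K : ℕ) :
    Bmw S K = (∑ t ∈ Finset.univ.filter (fun t : Fin n → Bool => wt t = K),
      (ahat S t) ^ 2) / (S.card : ℚ) ^ 2 := by
  classical
  have key : ∑ i ∈ Finset.range (n + 1),
      ((((S ×ˢ S).filter fun p => wt (xorv p.1 p.2) = i).card : ℚ)) * krav n K i
      = ∑ t ∈ Finset.univ.filter (fun t : Fin n → Bool => wt t = K), (ahat S t) ^ 2 := by
    have step1 : ∑ i ∈ Finset.range (n + 1),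
        ((((S ×ˢ S).filter fun p => wt (xorv p.1 p.2) = i).card : ℚ)) * krav n K i
        = ∑ p ∈ S ×ˢ S, krav n K (wt (xorv p.1 p.2)) := by
      rw [← Finset.sum_fiberwise_of_maps_to
        (g := fun p : (Fin n → Bool) × (Fin n → Bool) => wt (xorv p.1 p.2))
        (t := Finset.range (n + 1))
        (fun p _ => Finset.mem_range.mpr (Nat.lt_succ_of_le (wt_le _)))
        (fun p => krav n K (wt (xorv p.1 p.2)))]
      refine Finset.sum_congr rfl fun i _ => ?_
      rw [Finset.sum_congr rfl (fun p hp => by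
        rw [(Finset.mem_filter.mp hp).2]), Finset.sum_const, nsmul_eq_mul]
    rw [step1]
    have step2 : ∑ p ∈ S ×ˢ S, krav n K (wt (xorv p.1 p.2))
        = ∑ t ∈ Finset.univ.filter (fun t : Fin n → Bool => wt t = K),
            ∑ p ∈ S ×ˢ S, chr p.1 t * chr p.2 t := by
      rw [Finset.sum_comm]
      refine Finset.sum_congr rfl fun p _ => ?_
      rw [krav_eq]
      exact Finset.sum_congr rfl fun t _ => (chr_mul p.1 p.2 t).symm
    rw [step2]
    refine Finset.sum_congr rfl fun t _ => ?_
    rw [Finset.sum_product]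
    rw [sq, ahat, Finset.sum_mul_sum]
  rw [Bmw]
  have : ∀ i ∈ Finset.range (n + 1), Bdist S i * krav n K i
      = ((((S ×ˢ S).filter fun p => wt (xorv p.1 p.2) = i).card : ℚ)) * krav n K i
        / (S.card : ℚ) := by
    intro i _
    rw [Bdist]
    ring
  rw [Finset.sum_congr rfl this, ← Finset.sum_div, key, div_div, ← sq]
variable {n : ℕ}
lemma flipv_injective (x : Fin n → Bool) : Function.Injective (flipv x) := by
  intro i i' h
  by_contra hne
  have h1 := congrFun h i
  simp [flipv, hne] at h1

lemma nbr_filter_eq (x : Fin n → Bool) :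
    Finset.univ.filter (fun y => hammingDist x y = 1)
      = Finset.image (flipv x) Finset.univ := by
  ext y
  simp only [Finset.mem_filter, Finset.mem_univ, true_and, Finset.mem_image]
  constructor
  · intro hy
    have : (Finset.univ.filter fun i => x i ≠ y i).card = 1 := hy
    obtain ⟨i, hi⟩ := Finset.card_eq_one.mp this
    refine ⟨i, ?_⟩
    funext j
    by_cases hj : j = i
    · subst hj
      have hji : j ∈ Finset.univ.filter fun i => x i ≠ y i := by rw [hi]; exact Finset.mem_singleton_self j
      simp only [Finset.mem_filter, Finset.mem_univ, true_and, ne_eq] at hji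
      simp only [flipv, if_pos rfl]
      cases h1 : x j <;> cases h2 : y j <;> simp_all
    · have hji : j ∉ Finset.univ.filter fun i => x i ≠ y i := by
        rw [hi]; simpa using hj
      simp only [Finset.mem_filter, Finset.mem_univ, true_and, ne_eq, not_not] at hji
      simp only [flipv, if_neg hj]
      exact hji
  · rintro ⟨i, rfl⟩
    show (Finset.univ.filter fun j => x j ≠ flipv x i j).card = 1
    have : (Finset.univ.filter fun j => x j ≠ flipv x i j) = {i} := by
      ext j
      simp only [Finset.mem_filter, Finset.mem_univ, true_and, ne_eq, Finset.mem_singleton, flipv]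
      by_cases hj : j = i
      · subst hj; simp
      · simp [hj]
    rw [this, Finset.card_singleton]

lemma nbr_card (x : Fin n → Bool) :
    (Finset.univ.filter (fun y => hammingDist x y = 1)).card = n := by
  rw [nbr_filter_eq, Finset.card_image_of_injective _ (flipv_injective x),
    Finset.card_univ, Fintype.card_fin]

lemma sum_nbr (x : Fin n → Bool) (f : (Fin n → Bool) → ℚ) :
    ∑ y ∈ Finset.univ.filter (fun y => hammingDist x y = 1), f y
      = ∑ i : Fin n, f (flipv x i) := by
  rw [nbr_filter_eq, Finset.sum_image (fun a _ b _ hab => flipv_injective x hab)]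

lemma sum_pm (t : Fin n → Bool) :
    ∑ i : Fin n, (if t i = true then (-1 : ℚ) else 1) = (n : ℚ) - 2 * wt t := by
  rw [Finset.sum_ite, Finset.sum_const, Finset.sum_const]
  have h1 : (Finset.univ.filter fun i => t i = true).card = wt t := rfl
  have h2 : (Finset.univ.filter fun i => ¬t i = true).card = n - wt t := by
    have := Finset.card_filter_add_card_filter_not
      (s := (Finset.univ : Finset (Fin n))) (fun i => t i = true)
    rw [Finset.card_univ, Fintype.card_fin] at this
    rw [h1] at this
    omega
  rw [h1, h2, nsmul_eq_mul, nsmul_eq_mul, Nat.cast_sub (wt_le t)]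
  ring

lemma main_count (S : Finset (Fin n → Bool)) (k : ℕ)
    (hvan : ∀ t : Fin n → Bool, t ≠ zerov n → wt t ≠ k → ahat S t = 0)
    (x : Fin n → Bool) :
    (2 ^ n : ℚ) * ((Finset.univ.filter fun y => hammingDist x y = 1 ∧ y ∈ S).card : ℚ)
      = n * S.card + ((n : ℚ) - 2 * k) * ((if x ∈ S then (2 ^ n : ℚ) else 0) - S.card) := by
  classical
  have hcount : ((Finset.univ.filter fun y => hammingDist x y = 1 ∧ y ∈ S).card : ℚ)
      = ∑ y ∈ Finset.univ.filter (fun y => hammingDist x y = 1),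
          (if y ∈ S then (1 : ℚ) else 0) := by
    rw [← Finset.filter_filter, Finset.card_filter]
    push_cast
    rfl
  rw [hcount, sum_nbr, Finset.mul_sum]
  have hterm : ∀ i : Fin n, (2 ^ n : ℚ) * (if flipv x i ∈ S then (1 : ℚ) else 0)
      = ∑ t : Fin n → Bool, ahat S t * chr (flipv x i) t := by
    intro i
    rw [inversion]
    by_cases h : flipv x i ∈ S <;> simp [h]
  rw [Finset.sum_congr rfl fun i _ => hterm i, Finset.sum_comm]
  have hinner : ∀ t : Fin n → Bool,
      ∑ i : Fin n, ahat S t * chr (flipv x i) t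
        = ahat S t * chr x t * ((n : ℚ) - 2 * wt t) := by
    intro t
    have : ∀ i : Fin n, ahat S t * chr (flipv x i) t
        = ahat S t * chr x t * (if t i = true then (-1 : ℚ) else 1) := by
      intro i
      rw [← xorv_ev, ← chr_mul, chr_comm (ev i) t, chr_ev]
      ring
    rw [Finset.sum_congr rfl fun i _ => this i, ← Finset.mul_sum, sum_pm]
  rw [Finset.sum_congr rfl fun t _ => hinner t]
  have hsplit : ∀ t : Fin n → Bool,
      ahat S t * chr x t * ((n : ℚ) - 2 * wt t)
        = ahat S t * chr x t * ((n : ℚ) - 2 * k)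
          + (if t = zerov n then (2 * k : ℚ) * S.card else 0) := by
    intro t
    by_cases h0 : t = zerov n
    · subst h0
      rw [if_pos rfl, ahat_zero, chr_zero_right]
      have : wt (zerov n) = 0 := (wt_eq_zero_iff (zerov n)).mpr rfl
      rw [this]
      push_cast
      ring
    · rw [if_neg h0, add_zero]
      by_cases hk : wt t = k
      · rw [hk]
      · rw [hvan t h0 hk]
        ring
  rw [Finset.sum_congr rfl fun t _ => hsplit t, Finset.sum_add_distrib]
  have h1 : ∑ t : Fin n → Bool, ahat S t * chr x t * ((n : ℚ) - 2 * k)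
      = ((n : ℚ) - 2 * k) * (if x ∈ S then (2 ^ n : ℚ) else 0) := by
    rw [← Finset.sum_mul, inversion]
    ring
  have h2 : ∑ t : Fin n → Bool, (if t = zerov n then (2 * k : ℚ) * S.card else 0)
      = (2 * k : ℚ) * S.card := by
    rw [Finset.sum_ite_eq' Finset.univ (zerov n) (fun _ => (2 * k : ℚ) * S.card)]
    rw [if_pos (Finset.mem_univ _)]
  rw [h1, h2]
  ring
end Aux15

/-- If `0̄ ∈ S` and there is `k` with `B'_i(a) = 0` for all
`i ∉ {0, k}`, then `χ^S` is a perfect 2-coloring. -/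
theorem stmt15 {n : ℕ} (S : Finset (Fin n → Bool)) (h0 : (fun _ => false) ∈ S) (k : ℕ)
    (h : ∀ i : ℕ, i ≠ 0 → i ≠ k → Bmw S i = 0) :
    ∃ A : Fin 2 → Fin 2 → ℕ, IsPerfectColoring (chiCol S) A := by
  classical
  have h0' : Aux15.zerov n ∈ S := h0
  have hSne : S.Nonempty := ⟨_, h0⟩
  have hcard : (S.card : ℚ) ≠ 0 := by
    exact_mod_cast Nat.cast_ne_zero.mpr (Finset.card_ne_zero.mpr hSne)
  have hvan : ∀ t : Fin n → Bool, t ≠ Aux15.zerov n → wt t ≠ k → Aux15.ahat S t = 0 := by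
    intro t ht htk
    have hwt0 : wt t ≠ 0 := fun e => ht ((Aux15.wt_eq_zero_iff t).mp e)
    have hB := h (wt t) hwt0 htk
    rw [Aux15.Bmw_eq] at hB
    have hsum : ∑ u ∈ Finset.univ.filter (fun u : Fin n → Bool => wt u = wt t),
        (Aux15.ahat S u) ^ 2 = 0 :=
      (div_eq_zero_iff.mp hB).resolve_right (pow_ne_zero 2 hcard)
    have := (Finset.sum_eq_zero_iff_of_nonneg
      (fun u _ => sq_nonneg (Aux15.ahat S u))).mp hsum t (by simp)
    exact (pow_eq_zero_iff (by norm_num : 2 ≠ 0)).mp this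
  have hj2 : ∀ j : Fin 2, j = 0 ∨ j = 1 := by decide
  set N1 : (Fin n → Bool) → ℕ :=
    fun x => (Finset.univ.filter fun y => hammingDist x y = 1 ∧ y ∈ S).card with hN1
  set N0 : (Fin n → Bool) → ℕ :=
    fun x => (Finset.univ.filter fun y => hammingDist x y = 1 ∧ ¬ y ∈ S).card with hN0
  have hsumN : ∀ x, N1 x + N0 x = n := by
    intro x
    have key := Finset.card_filter_add_card_filter_not
      (s := Finset.univ.filter (fun y : Fin n → Bool => hammingDist x y = 1))
      (fun y => y ∈ S)
    rw [Aux15.nbr_card, Finset.filter_filter, Finset.filter_filter] at key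
    exact key
  have h2n : (2 ^ n : ℚ) ≠ 0 := by positivity
  have hEqS : ∀ x ∈ S, N1 x = N1 (Aux15.zerov n) := by
    intro x hx
    have e1 := Aux15.main_count S k hvan x
    have e2 := Aux15.main_count S k hvan (Aux15.zerov n)
    rw [if_pos hx] at e1
    rw [if_pos h0'] at e2
    have : (2 ^ n : ℚ) * (N1 x : ℚ) = (2 ^ n : ℚ) * (N1 (Aux15.zerov n) : ℚ) := by
      rw [hN1]; rw [e1, e2]
    exact_mod_cast mul_left_cancel₀ h2n this
  have hEqNS : ∀ x ∉ S, ∀ x' ∉ S, N1 x = N1 x' := by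
    intro x hx x' hx'
    have e1 := Aux15.main_count S k hvan x
    have e2 := Aux15.main_count S k hvan x'
    rw [if_neg hx] at e1
    rw [if_neg hx'] at e2
    have : (2 ^ n : ℚ) * (N1 x : ℚ) = (2 ^ n : ℚ) * (N1 x' : ℚ) := by
      rw [hN1]; rw [e1, e2]
    exact_mod_cast mul_left_cancel₀ h2n this
  have hcol1 : ∀ y, (chiCol S y = 1) = (y ∈ S) := by
    intro y
    rw [chiCol]
    by_cases hy : y ∈ S <;> simp [hy]
  have hcol0 : ∀ y, (chiCol S y = 0) = (¬ y ∈ S) := by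
    intro y
    rw [chiCol]
    by_cases hy : y ∈ S <;> simp [hy]
  have hflt1 : ∀ x : Fin n → Bool,
      (Finset.univ.filter fun y => hammingDist x y = 1 ∧ chiCol S y = 1).card = N1 x := by
    intro x
    rw [hN1]
    congr 1
    apply Finset.filter_congr
    intro y _
    rw [hcol1]
  have hflt0 : ∀ x : Fin n → Bool,
      (Finset.univ.filter fun y => hammingDist x y = 1 ∧ chiCol S y = 0).card = N0 x := by
    intro x
    rw [hN0]
    congr 1
    apply Finset.filter_congr
    intro y _
    rw [hcol0]
  by_cases hU : ∃ x₀, x₀ ∉ S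
  · obtain ⟨x₀, hx₀⟩ := hU
    refine ⟨fun i j => if i = 1 then (if j = 1 then N1 (Aux15.zerov n) else N0 (Aux15.zerov n))
        else (if j = 1 then N1 x₀ else N0 x₀), ?_⟩
    intro x j
    by_cases hx : x ∈ S
    · have hcx : chiCol S x = 1 := by rw [chiCol, if_pos hx]
      rw [hcx]
      rcases hj2 j with rfl | rfl
      · conv_rhs => norm_num
        have e0 := hsumN x
        have e1 := hsumN (Aux15.zerov n)
        have e2 := hEqS x hx
        rw [hflt0]
        omega
      · conv_rhs => norm_num
        rw [hflt1]
        exact hEqS x hx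
    · have hcx : chiCol S x = 0 := by rw [chiCol, if_neg hx]
      rw [hcx]
      rcases hj2 j with rfl | rfl
      · conv_rhs => norm_num
        have e0 := hsumN x
        have e1 := hsumN x₀
        have e2 := hEqNS x hx x₀ hx₀
        rw [hflt0]
        omega
      · conv_rhs => norm_num
        rw [hflt1]
        exact hEqNS x hx x₀ hx₀
  · push_neg at hU
    refine ⟨fun i j => if i = 1 then (if j = 1 then n else 0) else 0, ?_⟩
    intro x j
    have hcx : chiCol S x = 1 := by rw [chiCol, if_pos (hU x)]
    rw [hcx]
    rcases hj2 j with rfl | rfl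
    · conv_rhs => norm_num
      rw [Finset.card_eq_zero, Finset.filter_eq_empty_iff]
      intro y _
      rw [hcol0]
      simp [hU y]
    · conv_rhs => norm_num
      rw [hflt1]
      have : N1 x = (Finset.univ.filter fun y : Fin n → Bool => hammingDist x y = 1).card := by
        show (Finset.univ.filter fun y : Fin n → Bool => hammingDist x y = 1 ∧ y ∈ S).card = _
        congr 1
        apply Finset.filter_congr
        intro y _
        simp [hU y]
      rw [this, Aux15.nbr_card]
end

section
/- Let S ⊆ E^n with 0̄ ∈ S, a = χ^S, ρ(S) ≤ 1/2, and set t = cor(S). Then the equality nei(S) = ρ(S)·n + (n − 2(t+1))(1 − ρ(S)) holds if and only if B'_i(a) = 0 for every i ≥ t+2. -/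
open Finset

section Aux

variable {n : ℕ}

/-- The signed character `(-1)^{⟨x,v⟩}` written as a product over coordinates. -/
def sgn {n : ℕ} (x v : Fin n → Bool) : ℚ :=
  ∏ i : Fin n, (if x i = true ∧ v i = true then (-1 : ℚ) else 1)

lemma sgn_eq_pow (x v : Fin n → Bool) :
    sgn x v = (-1 : ℚ) ^ ((Finset.univ.filter fun i => x i = true ∧ v i = true).card) := by
  unfold sgn
  rw [Finset.prod_ite, Finset.prod_const, Finset.prod_const, one_pow, mul_one]

lemma sgn_mul (u w v : Fin n → Bool) : sgn u v * sgn w v = sgn (xorv u w) v := by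
  unfold sgn xorv
  rw [← Finset.prod_mul_distrib]
  refine Finset.prod_congr rfl fun i _ => ?_
  cases u i <;> cases w i <;> cases v i <;> norm_num

lemma sum_sgn (x : Fin n → Bool) :
    ∑ v : Fin n → Bool, sgn x v = if x = (fun _ => false) then (2 : ℚ) ^ n else 0 := by
  unfold sgn
  rw [← Fintype.prod_sum fun (i : Fin n) (b : Bool) => if x i = true ∧ b = true then (-1 : ℚ) else 1]
  have h : ∀ i : Fin n, (∑ b : Bool, if x i = true ∧ b = true then (-1 : ℚ) else 1)
      = if x i = true then 0 else 2 := by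
    intro i; cases h : x i <;> simp [Fintype.sum_bool, h]
  rw [Finset.prod_congr rfl fun i _ => h i]
  by_cases hx : x = fun _ => false
  · subst hx; simp
  · rw [if_neg hx]
    obtain ⟨i, hi⟩ : ∃ i, x i = true := by
      by_contra hc; push_neg at hc
      exact hx (funext fun i => by simpa using hc i)
    exact Finset.prod_eq_zero (Finset.mem_univ i) (by simp [hi])

end Aux
section Aux2

variable {n : ℕ}

lemma sum_pick_sgn (x : Fin n → Bool) (i : Fin n) :
    ∑ v : Fin n → Bool, (if v i = true then (1 : ℚ) else 0) * sgn x v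
      = (if x i = true then (-1 : ℚ) else 1) *
          ∏ j ∈ Finset.univ.erase i, (if x j = true then (0 : ℚ) else 2) := by
  have hv : ∀ v : Fin n → Bool, (if v i = true then (1 : ℚ) else 0) * sgn x v
      = ∏ j, ((if j = i then (if v j = true then (1 : ℚ) else 0) else 1) *
          (if x j = true ∧ v j = true then (-1 : ℚ) else 1)) := by
    intro v
    rw [Finset.prod_mul_distrib, Finset.prod_ite_eq' Finset.univ i
      (fun j => if v j = true then (1 : ℚ) else 0)]
    simp [sgn]
  rw [Finset.sum_congr rfl fun v _ => hv v,
    ← Fintype.prod_sum fun (j : Fin n) (b : Bool) =>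
      (if j = i then (if b = true then (1 : ℚ) else 0) else 1) *
        (if x j = true ∧ b = true then (-1 : ℚ) else 1),
    ← Finset.mul_prod_erase Finset.univ _ (Finset.mem_univ i)]
  congr 1
  · cases h : x i <;> simp [Fintype.sum_bool, h]
  · refine Finset.prod_congr rfl fun j hj => ?_
    have hne : j ≠ i := Finset.ne_of_mem_erase hj
    cases h : x j <;> simp [Fintype.sum_bool, h, hne]

lemma wt_cast (v : Fin n → Bool) :
    (wt v : ℚ) = ∑ i, if v i = true then (1 : ℚ) else 0 := by
  rw [wt, Finset.card_filter, Nat.cast_sum]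
  exact Finset.sum_congr rfl fun i _ => by split <;> simp

lemma sum_wt_sgn (x : Fin n → Bool) :
    ∑ v : Fin n → Bool, (wt v : ℚ) * sgn x v
      = (if x = (fun _ => false) then (n : ℚ) * 2 ^ (n - 1) else 0)
        - (if wt x = 1 then (2 : ℚ) ^ (n - 1) else 0) := by
  have hswap : ∑ v : Fin n → Bool, (wt v : ℚ) * sgn x v
      = ∑ i, ∑ v : Fin n → Bool, (if v i = true then (1 : ℚ) else 0) * sgn x v := by
    rw [Finset.sum_comm]
    exact Finset.sum_congr rfl fun v _ => by rw [wt_cast, Finset.sum_mul]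
  rw [hswap, Finset.sum_congr rfl fun i _ => sum_pick_sgn x i]
  by_cases hx : x = fun _ => false
  · subst hx
    have hwt : wt (fun _ : Fin n => false) = 0 := by simp [wt]
    rw [if_pos rfl, hwt]
    simp only [if_neg (by norm_num : (0 : ℕ) ≠ 1), sub_zero]
    have : ∀ i : Fin n, ((if (false : Bool) = true then (-1 : ℚ) else 1) *
        ∏ j ∈ Finset.univ.erase i, (if (false : Bool) = true then (0 : ℚ) else 2)) = 2 ^ (n - 1) := by
      intro i
      rw [if_neg (by simp), one_mul, Finset.prod_congr rfl fun j _ => if_neg (by simp),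
        Finset.prod_const, Finset.card_erase_of_mem (Finset.mem_univ i), Finset.card_univ,
        Fintype.card_fin]
    rw [Finset.sum_congr rfl fun i _ => this i, Finset.sum_const, Finset.card_univ,
      Fintype.card_fin, nsmul_eq_mul]
  · rw [if_neg hx, zero_sub]
    by_cases h1 : wt x = 1
    · rw [if_pos h1]
      obtain ⟨i₀, hi₀⟩ := Finset.card_eq_one.mp h1
      have hxi : ∀ j, x j = true ↔ j = i₀ := by
        intro j
        have h := Finset.ext_iff.mp hi₀ j
        simpa using h
      rw [Finset.sum_eq_single i₀]
      · rw [if_pos ((hxi i₀).mpr rfl)]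
        have hpr : ∀ j ∈ Finset.univ.erase i₀,
            (if x j = true then (0 : ℚ) else 2) = 2 := by
          intro j hj
          exact if_neg (fun hc => Finset.ne_of_mem_erase hj ((hxi j).mp hc))
        rw [Finset.prod_congr rfl hpr, Finset.prod_const,
          Finset.card_erase_of_mem (Finset.mem_univ i₀), Finset.card_univ, Fintype.card_fin]
        ring
      · intro i _ hne
        have hmem : i₀ ∈ Finset.univ.erase i :=
          Finset.mem_erase.mpr ⟨Ne.symm hne, Finset.mem_univ _⟩
        have hz : (∏ j ∈ Finset.univ.erase i, if x j = true then (0 : ℚ) else 2) = 0 :=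
          Finset.prod_eq_zero hmem (if_pos ((hxi i₀).mpr rfl))
        rw [hz, mul_zero]
      · intro h; exact absurd (Finset.mem_univ i₀) h
    · rw [if_neg h1, neg_zero]
      have h2 : 2 ≤ (Finset.univ.filter fun i => x i = true).card := by
        rcases Nat.lt_or_ge (Finset.univ.filter fun i => x i = true).card 2 with h | h
        · interval_cases hc : (Finset.univ.filter fun i => x i = true).card
          · exfalso
            apply hx
            funext j
            have : j ∉ Finset.univ.filter fun i => x i = true := by
              rw [Finset.card_eq_zero.mp hc]; simp
            simpa using this
          · exact absurd hc h1
        · exact h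
      obtain ⟨a, ha, b, hb, hab⟩ := Finset.one_lt_card.mp h2
      simp only [Finset.mem_filter] at ha hb
      refine Finset.sum_eq_zero fun i _ => ?_
      rcases ne_or_eq a i with hai | rfl
      · have hz : (∏ j ∈ Finset.univ.erase i, if x j = true then (0 : ℚ) else 2) = 0 :=
          Finset.prod_eq_zero (Finset.mem_erase.mpr ⟨hai, Finset.mem_univ _⟩) (if_pos ha.2)
        rw [hz, mul_zero]
      · have hz : (∏ j ∈ Finset.univ.erase a, if x j = true then (0 : ℚ) else 2) = 0 :=
          Finset.prod_eq_zero (Finset.mem_erase.mpr ⟨Ne.symm hab, Finset.mem_univ _⟩)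
            (if_pos hb.2)
        rw [hz, mul_zero]

end Aux2
section Aux3

variable {n : ℕ}

lemma count_split (A : Finset (Fin n)) (k j : ℕ) (hj : j ≤ k) :
    (((Finset.univ : Finset (Fin n)).powersetCard k).filter fun T => (A ∩ T).card = j).card
      = A.card.choose j * (n - A.card).choose (k - j) := by
  classical
  have hA : Aᶜ.card = n - A.card := by
    rw [Finset.card_compl, Fintype.card_fin]
  rw [← hA, ← Finset.card_powersetCard, ← Finset.card_powersetCard, ← Finset.card_product]
  apply Finset.card_bij' (fun T _ => (A ∩ T, T \ A)) (fun P _ => P.1 ∪ P.2)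
  · intro T hT
    rw [Finset.mem_filter, Finset.mem_powersetCard] at hT
    obtain ⟨⟨_, hTk⟩, hTj⟩ := hT
    rw [Finset.mem_product, Finset.mem_powersetCard, Finset.mem_powersetCard]
    refine ⟨⟨Finset.inter_subset_left, hTj⟩, fun x hx => ?_, ?_⟩
    · rw [Finset.mem_compl]; exact (Finset.mem_sdiff.mp hx).2
    · show (T \ A).card = k - j
      have h := Finset.card_sdiff_add_card_inter T A
      rw [Finset.inter_comm T A] at h
      omega
  · intro P hP
    rw [Finset.mem_product, Finset.mem_powersetCard, Finset.mem_powersetCard] at hP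
    obtain ⟨⟨hP1, hP1c⟩, hP2, hP2c⟩ := hP
    have hdisj : Disjoint P.1 P.2 := by
      rw [Finset.disjoint_left]
      intro x hx1 hx2
      exact (Finset.mem_compl.mp (hP2 hx2)) (hP1 hx1)
    have hinter : A ∩ (P.1 ∪ P.2) = P.1 := by
      ext x
      simp only [Finset.mem_inter, Finset.mem_union]
      constructor
      · rintro ⟨hxA, hx1 | hx2⟩
        · exact hx1
        · exact absurd hxA (Finset.mem_compl.mp (hP2 hx2))
      · intro hx1; exact ⟨hP1 hx1, Or.inl hx1⟩
    rw [Finset.mem_filter, Finset.mem_powersetCard]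
    refine ⟨⟨Finset.subset_univ _, ?_⟩, by rw [hinter, hP1c]⟩
    rw [Finset.card_union_of_disjoint hdisj, hP1c, hP2c]
    omega
  · intro T hT
    rw [Finset.mem_filter] at hT
    ext x
    simp only [Finset.mem_union, Finset.mem_inter, Finset.mem_sdiff]
    tauto
  · intro P hP
    rw [Finset.mem_product, Finset.mem_powersetCard, Finset.mem_powersetCard] at hP
    obtain ⟨⟨hP1, hP1c⟩, hP2, hP2c⟩ := hP
    have h1 : ∀ x ∈ P.1, x ∈ A := fun x hx => hP1 hx
    have h2 : ∀ x ∈ P.2, x ∉ A := fun x hx => Finset.mem_compl.mp (hP2 hx)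
    ext x
    · simp only [Finset.mem_inter, Finset.mem_union]
      constructor
      · rintro ⟨hxA, hx1 | hx2⟩
        · exact hx1
        · exact absurd hxA (h2 x hx2)
      · intro hx1; exact ⟨h1 x hx1, Or.inl hx1⟩
    · simp only [Finset.mem_sdiff, Finset.mem_union]
      constructor
      · rintro ⟨hx1 | hx2, hxA⟩
        · exact absurd (h1 x hx1) hxA
        · exact hx2
      · intro hx2; exact ⟨Or.inr hx2, h2 x hx2⟩

lemma sum_sgn_filter_wt (k : ℕ) (x : Fin n → Bool) :
    ∑ v ∈ Finset.univ.filter (fun v => wt v = k), sgn x v = krav n k (wt x) := by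
  classical
  set A : Finset (Fin n) := Finset.univ.filter (fun i => x i = true) with hA
  have step1 : ∑ v ∈ Finset.univ.filter (fun v => wt v = k), sgn x v
      = ∑ T ∈ (Finset.univ : Finset (Fin n)).powersetCard k, (-1 : ℚ) ^ (A ∩ T).card := by
    apply Finset.sum_nbij' (i := fun v => Finset.univ.filter fun i => v i = true)
      (j := fun T => fun i => decide (i ∈ T))
    · intro v hv
      rw [Finset.mem_filter] at hv
      rw [Finset.mem_powersetCard]
      exact ⟨Finset.subset_univ _, hv.2⟩
    · intro T hT
      rw [Finset.mem_powersetCard] at hT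
      rw [Finset.mem_filter]
      refine ⟨Finset.mem_univ _, ?_⟩
      have hfT : Finset.univ.filter (fun i => decide (i ∈ T) = true) = T := by
        ext i; simp
      rw [wt, hfT, hT.2]
    · intro v _
      funext i
      simp only [Finset.mem_filter, Finset.mem_univ, true_and]
      cases h : v i <;> simp [h]
    · intro T hT
      ext i
      simp
    · intro v _
      rw [sgn_eq_pow]
      congr 1
      congr 1
      ext i
      simp [hA]
  rw [step1,
    ← Finset.sum_fiberwise_of_maps_to (g := fun T => (A ∩ T).card)
      (t := Finset.range (k + 1)) (fun T hT => by
        rw [Finset.mem_powersetCard] at hT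
        show (A ∩ T).card ∈ Finset.range (k + 1)
        rw [Finset.mem_range]
        have := Finset.card_le_card (Finset.inter_subset_right (s₁ := A) (s₂ := T))
        omega)]
  have hwtA : wt x = A.card := rfl
  rw [krav, hwtA]
  refine Finset.sum_congr rfl fun j hj => ?_
  rw [Finset.mem_range] at hj
  have hconst : ∀ T ∈ ((Finset.univ : Finset (Fin n)).powersetCard k).filter
      (fun T => (A ∩ T).card = j), (-1 : ℚ) ^ (A ∩ T).card = (-1 : ℚ) ^ j := by
    intro T hT
    rw [(Finset.mem_filter.mp hT).2]
  rw [Finset.sum_congr rfl hconst, Finset.sum_const, count_split A k j (by omega),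
    nsmul_eq_mul]
  push_cast
  ring

end Aux3
section Aux4

variable {n : ℕ}

lemma wt_update {y : Fin n → Bool} {i : Fin n} (hi : y i = false) :
    wt (Function.update y i true) = wt y + 1 := by
  rw [wt, wt]
  have h : Finset.univ.filter (fun j => Function.update y i true j = true)
      = insert i (Finset.univ.filter fun j => y j = true) := by
    ext j
    by_cases h : j = i
    · subst h; simp [Function.update_self]
    · simp [Function.update_apply, h]
  rw [h, Finset.card_insert_of_notMem (by simp [hi])]

lemma face_split (S : Finset (Fin n → Bool)) (y z : Fin n → Bool) (i : Fin n)
    (hi : y i = false) :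
    (face y z ∩ S).card
      = (face (Function.update y i true) (Function.update z i false) ∩ S).card
        + (face (Function.update y i true) (Function.update z i true) ∩ S).card := by
  classical
  have hsub : ∀ b : Bool, face (Function.update y i true) (Function.update z i b)
      = (face y z).filter (fun x => x i = b) := by
    intro b
    ext x
    simp only [face, Finset.mem_filter, Finset.mem_univ, true_and, Function.update_apply]
    constructor
    · intro h
      refine ⟨fun j hj => ?_, ?_⟩
      · have hji : ¬ j = i := fun e => by rw [e, hi] at hj; cases hj
        have := h j (by simp [hji, hj])
        simpa [hji] using this
      · simpa using h i (by simp)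
    · rintro ⟨h, hxi⟩ j hj
      by_cases hji : j = i
      · subst hji; simpa [hxi] using hj.symm ▸ rfl
      · simp only [if_neg hji] at hj ⊢; exact h j hj
  have key : ∀ b : Bool, face (Function.update y i true) (Function.update z i b) ∩ S
      = (face y z ∩ S).filter (fun x => x i = b) := by
    intro b
    rw [hsub b]
    ext x
    simp only [Finset.mem_inter, Finset.mem_filter]
    tauto
  rw [key, key]
  have htot := Finset.card_filter_add_card_filter_not
    (s := face y z ∩ S) (p := fun x => x i = true)
  have hneg : (face y z ∩ S).filter (fun x => ¬ x i = true)
      = (face y z ∩ S).filter (fun x => x i = false) := by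
    apply Finset.filter_congr
    intro x _
    simp [Bool.not_eq_true]
  rw [hneg] at htot
  exact htot.symm.trans (Nat.add_comm _ _)

lemma ci_zero (S : Finset (Fin n → Bool)) : CorrImmune S 0 := by
  intro y₁ z₁ y₂ z₂ h₁ h₂
  have f : ∀ y z : Fin n → Bool, wt y = 0 → face y z = Finset.univ := by
    intro y z hy
    rw [wt] at hy
    have he := Finset.card_eq_zero.mp hy
    ext x
    simp only [face, Finset.mem_filter, Finset.mem_univ, true_and, iff_true]
    intro i hi
    exact absurd (Finset.mem_filter.mpr ⟨Finset.mem_univ i, hi⟩)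
      (he ▸ Finset.notMem_empty i)
  rw [f _ _ h₁, f _ _ h₂]

lemma ci_step (S : Finset (Fin n → Bool)) (k : ℕ) (hk : k < n)
    (h : CorrImmune S (k + 1)) : CorrImmune S k := by
  intro y₁ z₁ y₂ z₂ h₁ h₂
  have exi : ∀ y : Fin n → Bool, wt y = k → ∃ i, y i = false := by
    intro y hy
    by_contra hc
    push_neg at hc
    have hall : ∀ i, y i = true := by
      intro i
      cases h' : y i
      · exact absurd h' (hc i)
      · rfl
    have : wt y = n := by
      rw [wt, Finset.filter_true_of_mem (fun i _ => hall i), Finset.card_univ, Fintype.card_fin]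
    omega
  obtain ⟨i₁, hi₁⟩ := exi y₁ h₁
  obtain ⟨i₂, hi₂⟩ := exi y₂ h₂
  have w₁ : wt (Function.update y₁ i₁ true) = k + 1 := by rw [wt_update hi₁, h₁]
  have w₂ : wt (Function.update y₂ i₂ true) = k + 1 := by rw [wt_update hi₂, h₂]
  rw [face_split S y₁ z₁ i₁ hi₁, face_split S y₂ z₂ i₂ hi₂,
    h _ (Function.update z₁ i₁ false) _ (Function.update z₂ i₂ false) w₁ w₂,
    h _ (Function.update z₁ i₁ true) _ (Function.update z₂ i₂ true) w₁ w₂]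

lemma ci_cor (S : Finset (Fin n → Bool)) (k : ℕ) (hk : k ≤ cor S) : CorrImmune S k := by
  have hmem : cor S ∈ {k | k ≤ n ∧ CorrImmune S k} := by
    apply Nat.sSup_mem
    · exact ⟨0, ⟨Nat.zero_le n, ci_zero S⟩⟩
    · exact ⟨n, fun x hx => hx.1⟩
  obtain ⟨hle, hci⟩ := hmem
  have down : ∀ m, m ≤ n → CorrImmune S m → ∀ j, j ≤ m → CorrImmune S j := by
    intro m
    induction m with
    | zero =>
      intro _ h j hj
      rw [Nat.le_zero.mp hj]
      exact h
    | succ m ih =>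
      intro hm h j hj
      rcases Nat.eq_or_lt_of_le hj with rfl | hlt
      · exact h
      · exact ih (by omega) (ci_step S m (by omega) h) j (by omega)
  exact down (cor S) hle hci k hk

lemma sum_sgn_over_S (S : Finset (Fin n → Bool)) (v : Fin n → Bool)
    (hCI : CorrImmune S (wt v)) (hv : v ≠ fun _ => false) :
    ∑ u ∈ S, sgn u v = 0 := by
  classical
  set Av : Finset (Fin n) := Finset.univ.filter (fun i => v i = true) with hAv
  have hgroup := (Finset.sum_fiberwise_of_maps_to
    (g := fun u : Fin n → Bool => Finset.univ.filter fun i => u i = true ∧ v i = true)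
    (s := S) (t := Av.powerset)
    (fun u _ => Finset.mem_powerset.mpr (fun i hi => by
      simp only [Finset.mem_filter] at hi
      simp [hAv, hi.2.2])) (fun u => sgn u v)).symm
  rw [hgroup]
  have hfiber : ∀ T ∈ Av.powerset,
      (S.filter fun u =>
          (Finset.univ.filter fun i => u i = true ∧ v i = true) = T)
        = face v (fun i => decide (i ∈ T)) ∩ S := by
    intro T hT
    have hTA := Finset.mem_powerset.mp hT
    ext u
    simp only [Finset.mem_filter, Finset.mem_inter, face, Finset.mem_univ, true_and]
    constructor
    · rintro ⟨hu, rfl⟩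
      refine ⟨fun i hi => ?_, hu⟩
      cases h' : u i
      · simp [h', hi]
      · simp [h', hi]
    · rintro ⟨hf, hu⟩
      refine ⟨hu, ?_⟩
      ext i
      simp only [Finset.mem_filter, Finset.mem_univ, true_and]
      by_cases hvi : v i = true
      · have := hf i hvi
        constructor
        · rintro ⟨hui, -⟩
          rw [hui] at this
          exact of_decide_eq_true this.symm
        · intro hiT
          rw [decide_eq_true hiT] at this
          exact ⟨this, hvi⟩
      · constructor
        · rintro ⟨-, h⟩; exact absurd h hvi
        · intro hiT
          exact absurd (by simpa [hAv] using hTA hiT) hvi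
  have hval : ∀ T ∈ Av.powerset,
      (∑ u ∈ S.filter (fun u =>
          (Finset.univ.filter fun i => u i = true ∧ v i = true) = T), sgn u v)
        = (-1 : ℚ) ^ T.card * ((face v (fun _ => false) ∩ S).card : ℚ) := by
    intro T hT
    have hc : ∀ u ∈ S.filter (fun u =>
        (Finset.univ.filter fun i => u i = true ∧ v i = true) = T),
        sgn u v = (-1 : ℚ) ^ T.card := by
      intro u hu
      rw [sgn_eq_pow, (Finset.mem_filter.mp hu).2]
    rw [Finset.sum_congr rfl hc, Finset.sum_const, hfiber T hT,
      hCI v (fun i => decide (i ∈ T)) v (fun _ => false) rfl rfl, nsmul_eq_mul]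
    ring
  rw [Finset.sum_congr rfl hval, ← Finset.sum_mul]
  have hne : Av.Nonempty := by
    by_contra hc
    rw [Finset.not_nonempty_iff_eq_empty] at hc
    apply hv
    funext i
    cases h' : v i
    · rfl
    · exact absurd (Finset.mem_filter.mpr ⟨Finset.mem_univ i, h'⟩)
        (hc ▸ Finset.notMem_empty i)
  have hzero : (∑ T ∈ Av.powerset, (-1 : ℚ) ^ T.card) = 0 := by
    have hz := Finset.sum_powerset_neg_one_pow_card_of_nonempty hne
    have : (∑ T ∈ Av.powerset, (-1 : ℚ) ^ T.card)
        = ((∑ T ∈ Av.powerset, (-1 : ℤ) ^ T.card : ℤ) : ℚ) := by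
      push_cast
      rfl
    rw [this, hz]
    norm_num
  rw [hzero, zero_mul]

end Aux4
section Aux5

variable {n : ℕ}

lemma xorv_eq_zero_iff (u w : Fin n → Bool) :
    xorv u w = (fun _ => false) ↔ u = w := by
  constructor
  · intro h
    funext i
    have := congrFun h i
    simp only [xorv] at this
    cases hu : u i <;> cases hw : w i <;> simp [hu, hw] at this ⊢
  · rintro rfl
    funext i
    simp [xorv]

lemma wt_xorv (u w : Fin n → Bool) : wt (xorv u w) = hammingDist u w := by
  rw [wt, hammingDist]
  congr 1
  ext i
  simp only [Finset.mem_filter, Finset.mem_univ, true_and, xorv]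
  cases h1 : u i <;> cases h2 : w i <;> simp [h1, h2]

lemma wt_le (v : Fin n → Bool) : wt v ≤ n := by
  rw [wt]
  calc (Finset.univ.filter fun i => v i = true).card
      ≤ (Finset.univ : Finset (Fin n)).card := Finset.card_filter_le _ _
    _ = n := by rw [Finset.card_univ, Fintype.card_fin]

lemma Bmw_eq_Q (S : Finset (Fin n → Bool)) (k : ℕ) :
    Bmw S k = (∑ v ∈ Finset.univ.filter (fun v => wt v = k), (∑ u ∈ S, sgn u v) ^ 2)
      / ((S.card : ℚ)) ^ 2 := by
  classical
  have hN : ∑ v ∈ Finset.univ.filter (fun v => wt v = k), (∑ u ∈ S, sgn u v) ^ 2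
      = ∑ p ∈ S ×ˢ S, krav n k (wt (xorv p.1 p.2)) := by
    have h1 : ∀ v, (∑ u ∈ S, sgn u v) ^ 2 = ∑ p ∈ S ×ˢ S, sgn (xorv p.1 p.2) v := by
      intro v
      rw [sq, Finset.sum_mul_sum, Finset.sum_product]
      exact Finset.sum_congr rfl fun u _ =>
        Finset.sum_congr rfl fun w _ => sgn_mul u w v
    rw [Finset.sum_congr rfl fun v _ => h1 v, Finset.sum_comm]
    exact Finset.sum_congr rfl fun p _ => sum_sgn_filter_wt k (xorv p.1 p.2)
  have hM : ∑ p ∈ S ×ˢ S, krav n k (wt (xorv p.1 p.2))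
      = ∑ i ∈ Finset.range (n + 1),
          ((((S ×ˢ S).filter fun p => wt (xorv p.1 p.2) = i).card : ℚ)) * krav n k i := by
    rw [← Finset.sum_fiberwise_of_maps_to
      (g := fun p : (Fin n → Bool) × (Fin n → Bool) => wt (xorv p.1 p.2))
      (s := S ×ˢ S) (t := Finset.range (n + 1))
      (fun p _ => Finset.mem_range.mpr (Nat.lt_succ_of_le (wt_le _)))
      (fun p : (Fin n → Bool) × (Fin n → Bool) => krav n k (wt (xorv p.1 p.2)))]
    refine Finset.sum_congr rfl fun i _ => ?_
    have hc : ∀ p ∈ (S ×ˢ S).filter fun p => wt (xorv p.1 p.2) = i,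
        krav n k (wt (xorv p.1 p.2)) = krav n k i := by
      intro p hp
      rw [(Finset.mem_filter.mp hp).2]
    rw [Finset.sum_congr rfl hc, Finset.sum_const, nsmul_eq_mul]
  rw [hN, hM, Bmw]
  have : ∑ i ∈ Finset.range (n + 1), Bdist S i * krav n k i
      = (∑ i ∈ Finset.range (n + 1),
          ((((S ×ˢ S).filter fun p => wt (xorv p.1 p.2) = i).card : ℚ)) * krav n k i)
        / (S.card : ℚ) := by
    rw [Finset.sum_div]
    refine Finset.sum_congr rfl fun i _ => ?_
    rw [Bdist]
    ring
  rw [this, div_div, sq]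

lemma sum_Q_eq (S : Finset (Fin n → Bool)) :
    ∑ k ∈ Finset.range (n + 1),
        (∑ v ∈ Finset.univ.filter (fun v => wt v = k), (∑ u ∈ S, sgn u v) ^ 2)
      = 2 ^ n * (S.card : ℚ) := by
  classical
  rw [Finset.sum_fiberwise_of_maps_to (g := fun v => wt v) (t := Finset.range (n + 1))
    (fun v _ => Finset.mem_range.mpr (Nat.lt_succ_of_le (wt_le _)))
    (fun v => (∑ u ∈ S, sgn u v) ^ 2)]
  have h1 : ∀ v : Fin n → Bool, (∑ u ∈ S, sgn u v) ^ 2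
      = ∑ p ∈ S ×ˢ S, sgn (xorv p.1 p.2) v := by
    intro v
    rw [sq, Finset.sum_mul_sum, Finset.sum_product]
    exact Finset.sum_congr rfl fun u _ =>
      Finset.sum_congr rfl fun w _ => sgn_mul u w v
  rw [Finset.sum_congr rfl fun v (_ : v ∈ Finset.univ) => h1 v, Finset.sum_comm]
  have h2 : ∀ p : (Fin n → Bool) × (Fin n → Bool), p ∈ S ×ˢ S →
      (∑ v : Fin n → Bool, sgn (xorv p.1 p.2) v)
        = if p.2 = p.1 then (2 : ℚ) ^ n else 0 := by
    intro p _
    rw [sum_sgn]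
    exact if_congr (by rw [xorv_eq_zero_iff]; exact ⟨fun h => h.symm, fun h => h.symm⟩) rfl rfl
  rw [Finset.sum_congr rfl h2, Finset.sum_product]
  have h3 : ∀ u ∈ S, (∑ w ∈ S, if w = u then (2 : ℚ) ^ n else 0) = 2 ^ n := by
    intro u hu
    rw [Finset.sum_ite_eq' S u (fun _ => (2 : ℚ) ^ n), if_pos hu]
  rw [Finset.sum_congr rfl h3, Finset.sum_const, nsmul_eq_mul]
  ring

lemma sum_kQ_eq (S : Finset (Fin n → Bool)) :
    ∑ k ∈ Finset.range (n + 1),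
        (k : ℚ) * (∑ v ∈ Finset.univ.filter (fun v => wt v = k), (∑ u ∈ S, sgn u v) ^ 2)
      = (n : ℚ) * 2 ^ (n - 1) * (S.card : ℚ)
        - 2 ^ (n - 1) * (((S ×ˢ S).filter fun p => wt (xorv p.1 p.2) = 1).card : ℚ) := by
  classical
  have step1 : ∀ k ∈ Finset.range (n + 1),
      (k : ℚ) * (∑ v ∈ Finset.univ.filter (fun v => wt v = k), (∑ u ∈ S, sgn u v) ^ 2)
        = ∑ v ∈ Finset.univ.filter (fun v => wt v = k),
            (wt v : ℚ) * (∑ u ∈ S, sgn u v) ^ 2 := by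
    intro k _
    rw [Finset.mul_sum]
    refine Finset.sum_congr rfl fun v hv => ?_
    rw [(Finset.mem_filter.mp hv).2]
  rw [Finset.sum_congr rfl step1,
    Finset.sum_fiberwise_of_maps_to (g := fun v => wt v) (t := Finset.range (n + 1))
      (fun v _ => Finset.mem_range.mpr (Nat.lt_succ_of_le (wt_le _)))
      (fun v => (wt v : ℚ) * (∑ u ∈ S, sgn u v) ^ 2)]
  have h1 : ∀ v : Fin n → Bool, (wt v : ℚ) * (∑ u ∈ S, sgn u v) ^ 2
      = ∑ p ∈ S ×ˢ S, (wt v : ℚ) * sgn (xorv p.1 p.2) v := by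
    intro v
    rw [← Finset.mul_sum, sq, Finset.sum_mul_sum, Finset.sum_product]
    congr 1
    exact Finset.sum_congr rfl fun u _ =>
      Finset.sum_congr rfl fun w _ => sgn_mul u w v
  rw [Finset.sum_congr rfl fun v (_ : v ∈ Finset.univ) => h1 v, Finset.sum_comm]
  have h2 : ∀ p : (Fin n → Bool) × (Fin n → Bool), p ∈ S ×ˢ S →
      (∑ v : Fin n → Bool, (wt v : ℚ) * sgn (xorv p.1 p.2) v)
        = (if p.2 = p.1 then (n : ℚ) * 2 ^ (n - 1) else 0)
          - (if wt (xorv p.1 p.2) = 1 then (2 : ℚ) ^ (n - 1) else 0) := by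
    intro p _
    rw [sum_wt_sgn]
    congr 1
    exact if_congr (by rw [xorv_eq_zero_iff]; exact ⟨fun h => h.symm, fun h => h.symm⟩) rfl rfl
  rw [Finset.sum_congr rfl h2, Finset.sum_sub_distrib]
  congr 1
  · rw [Finset.sum_product]
    have h3 : ∀ u ∈ S, (∑ w ∈ S, if w = u then (n : ℚ) * 2 ^ (n - 1) else 0)
        = (n : ℚ) * 2 ^ (n - 1) := by
      intro u hu
      rw [Finset.sum_ite_eq' S u (fun _ => (n : ℚ) * 2 ^ (n - 1)), if_pos hu]
    rw [Finset.sum_congr rfl h3, Finset.sum_const, nsmul_eq_mul]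
    ring
  · rw [← Finset.sum_filter, Finset.sum_const, nsmul_eq_mul]
    ring

lemma nei_eq (S : Finset (Fin n → Bool)) (hS : S.Nonempty) :
    nei S = (((S ×ˢ S).filter fun p => wt (xorv p.1 p.2) = 1).card : ℚ) / (S.card : ℚ) := by
  classical
  have hcard : ∑ x ∈ S, (S.filter fun y => hammingDist x y ≤ 1).card
      = ((S ×ˢ S).filter fun p => hammingDist p.1 p.2 ≤ 1).card := by
    rw [Finset.card_filter, Finset.sum_product]
    refine Finset.sum_congr rfl fun x _ => ?_
    rw [Finset.card_filter]
  have hsplit : ((S ×ˢ S).filter fun p => hammingDist p.1 p.2 ≤ 1).card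
      = ((S ×ˢ S).filter fun p => hammingDist p.1 p.2 = 0).card
        + ((S ×ˢ S).filter fun p => hammingDist p.1 p.2 = 1).card := by
    have hor : (S ×ˢ S).filter (fun p => hammingDist p.1 p.2 ≤ 1)
        = (S ×ˢ S).filter (fun p => hammingDist p.1 p.2 = 0 ∨ hammingDist p.1 p.2 = 1) := by
      apply Finset.filter_congr
      intro p _
      constructor
      · intro h; omega
      · intro h; omega
    rw [hor, Finset.filter_or, Finset.card_union_of_disjoint]
    rw [Finset.disjoint_left]
    intro p hp hp'
    rw [Finset.mem_filter] at hp hp'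
    omega
  have hdiag : ((S ×ˢ S).filter fun p => hammingDist p.1 p.2 = 0).card = S.card := by
    refine Finset.card_bij' (fun p _ => p.1) (fun u _ => (u, u)) ?_ ?_ ?_ ?_
    · intro p hp
      rw [Finset.mem_filter, Finset.mem_product] at hp
      exact hp.1.1
    · intro u hu
      rw [Finset.mem_filter, Finset.mem_product]
      exact ⟨⟨hu, hu⟩, by simp [hammingDist_eq_zero]⟩
    · intro p hp
      rw [Finset.mem_filter] at hp
      have h2 : p.1 = p.2 := hammingDist_eq_zero.mp hp.2
      exact Prod.ext_iff.mpr ⟨rfl, h2⟩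
    · intro u _
      rfl
  have hD : ((S ×ˢ S).filter fun p => hammingDist p.1 p.2 = 1).card
      = ((S ×ˢ S).filter fun p => wt (xorv p.1 p.2) = 1).card := by
    congr 1
    apply Finset.filter_congr
    intro p _
    rw [wt_xorv]
  have hs : (S.card : ℚ) ≠ 0 := Nat.cast_ne_zero.mpr (Finset.card_ne_zero_of_mem hS.choose_spec)
  rw [nei]
  have : (∑ x ∈ S, ((S.filter fun y => hammingDist x y ≤ 1).card : ℚ))
      = (S.card : ℚ) + (((S ×ˢ S).filter fun p => wt (xorv p.1 p.2) = 1).card : ℚ) := by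
    rw [← Nat.cast_sum, hcard, hsplit, hdiag, hD]
    push_cast
    ring
  rw [this]
  field_simp
  ring

end Aux5
/-- For `0̄ ∈ S`, `ρ(S) ≤ 1/2` and `t = cor S`:
`nei S = ρ(S)·n + (n - 2(t+1))(1 - ρ(S))` iff `B'_i(a) = 0` for every `i ≥ t + 2`. -/
theorem stmt16 {n : ℕ} (S : Finset (Fin n → Bool)) (h0 : (fun _ => false) ∈ S)
    (hρ : rho S ≤ 1 / 2) (t : ℕ) (ht : t = cor S) :
    nei S = rho S * (n : ℚ) + ((n : ℚ) - 2 * ((t : ℚ) + 1)) * (1 - rho S) ↔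
      ∀ i : ℕ, t + 2 ≤ i → Bmw S i = 0 := by
  classical
  have hSne : S.Nonempty := ⟨_, h0⟩
  have hs0 : (S.card : ℚ) ≠ 0 := Nat.cast_ne_zero.mpr (Finset.card_ne_zero_of_mem h0)
  have hn : 1 ≤ n := by
    by_contra hc
    push_neg at hc
    have hn0 : n = 0 := by omega
    subst hn0
    rw [rho] at hρ
    have h1 : (1 : ℚ) ≤ (S.card : ℚ) := by
      exact_mod_cast Finset.card_pos.mpr hSne
    norm_num at hρ
    linarith
  set s : ℚ := (S.card : ℚ) with hs
  set D : ℚ := (((S ×ˢ S).filter fun p => wt (xorv p.1 p.2) = 1).card : ℚ) with hD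
  set Q : ℕ → ℚ := fun k =>
    ∑ v ∈ Finset.univ.filter (fun v => wt v = k), (∑ u ∈ S, sgn u v) ^ 2 with hQ
  have hQnn : ∀ k, 0 ≤ Q k := by
    intro k
    simp only [hQ]
    exact Finset.sum_nonneg fun v _ => sq_nonneg _
  have hBQ : ∀ k, Bmw S k = Q k / s ^ 2 := by
    intro k
    simp only [hQ, hs]
    exact Bmw_eq_Q S k
  have hQhigh : ∀ k, n < k → Q k = 0 := by
    intro k hk
    simp only [hQ]
    have hfe : Finset.univ.filter (fun v : Fin n → Bool => wt v = k) = ∅ := by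
      rw [Finset.filter_eq_empty_iff]
      intro v _
      intro h
      exact absurd (h ▸ wt_le v) (by omega)
    rw [hfe, Finset.sum_empty]
  have hQ0 : Q 0 = s ^ 2 := by
    simp only [hQ]
    have hf : Finset.univ.filter (fun v : Fin n → Bool => wt v = 0)
        = {fun _ => false} := by
      ext v
      simp only [Finset.mem_filter, Finset.mem_univ, true_and, Finset.mem_singleton]
      constructor
      · intro hv
        rw [wt] at hv
        have hemp := Finset.card_eq_zero.mp hv
        funext i
        cases h' : v i
        · rfl
        · exact absurd (Finset.mem_filter.mpr ⟨Finset.mem_univ i, h'⟩)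
            (hemp ▸ Finset.notMem_empty i)
      · rintro rfl
        simp [wt]
    rw [hf, Finset.sum_singleton]
    have h1 : ∀ u ∈ S, sgn u (fun _ => false) = 1 := by
      intro u _
      simp [sgn]
    rw [Finset.sum_congr rfl h1, Finset.sum_const, nsmul_eq_mul, mul_one, sq]
  have hQmid : ∀ k, 1 ≤ k → k ≤ t → Q k = 0 := by
    intro k h1 h2
    simp only [hQ]
    refine Finset.sum_eq_zero fun v hv => ?_
    rw [Finset.mem_filter] at hv
    have hwt : wt v = k := hv.2
    have hv0 : v ≠ fun _ => false := by
      intro hc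
      subst hc
      rw [show wt (fun _ : Fin n => false) = 0 from by simp [wt]] at hwt
      omega
    have hci : CorrImmune S (wt v) := by
      rw [hwt]
      exact ci_cor S k (by rw [← ht]; exact h2)
    rw [sum_sgn_over_S S v hci hv0]
    norm_num
  have hsum : ∑ k ∈ Finset.range (n + 1), Q k = 2 ^ n * s := by
    simp only [hQ, hs]
    exact sum_Q_eq S
  have hsumk : ∑ k ∈ Finset.range (n + 1), (k : ℚ) * Q k
      = (n : ℚ) * 2 ^ (n - 1) * s - 2 ^ (n - 1) * D := by
    simp only [hQ, hs, hD]
    exact sum_kQ_eq S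
  have hnei : nei S = D / s := by
    rw [hD, hs]
    exact nei_eq S hSne
  have hW1 : ∑ k ∈ Finset.range (n + 1), ((k : ℚ) - ((t : ℚ) + 1)) * Q k
      = ((n : ℚ) * 2 ^ (n - 1) * s - 2 ^ (n - 1) * D) - ((t : ℚ) + 1) * (2 ^ n * s) := by
    have h : ∀ k ∈ Finset.range (n + 1), ((k : ℚ) - ((t : ℚ) + 1)) * Q k
        = (k : ℚ) * Q k - ((t : ℚ) + 1) * Q k := fun k _ => by ring
    rw [Finset.sum_congr rfl h, Finset.sum_sub_distrib, hsumk, ← Finset.mul_sum, hsum]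
  have hW2 : ∑ k ∈ Finset.range (n + 1), ((k : ℚ) - ((t : ℚ) + 1)) * Q k
      = -(((t : ℚ) + 1) * s ^ 2)
        + ∑ k ∈ Finset.range (n + 1),
            (if t + 2 ≤ k then ((k : ℚ) - ((t : ℚ) + 1)) * Q k else 0) := by
    have h : ∀ k ∈ Finset.range (n + 1), ((k : ℚ) - ((t : ℚ) + 1)) * Q k
        = (if k = 0 then -(((t : ℚ) + 1) * s ^ 2) else 0)
          + (if t + 2 ≤ k then ((k : ℚ) - ((t : ℚ) + 1)) * Q k else 0) := by
      intro k _
      rcases Nat.eq_zero_or_pos k with rfl | hk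
      · rw [if_pos rfl, if_neg (by omega), hQ0]
        push_cast
        ring
      · rw [if_neg (by omega)]
        rcases le_or_gt (t + 2) k with hk2 | hk2
        · rw [if_pos hk2]
          ring
        · rw [if_neg (by omega)]
          by_cases hkt : k = t + 1
          · subst hkt
            push_cast
            ring
          · rw [hQmid k hk (by omega), mul_zero, add_zero]
    rw [Finset.sum_congr rfl h, Finset.sum_add_distrib,
      Finset.sum_ite_eq' (Finset.range (n + 1)) 0 (fun _ => -(((t : ℚ) + 1) * s ^ 2)),
      if_pos (Finset.mem_range.mpr (by omega))]
  have hterm_nn : ∀ k ∈ Finset.range (n + 1),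
      0 ≤ (if t + 2 ≤ k then ((k : ℚ) - ((t : ℚ) + 1)) * Q k else 0) := by
    intro k _
    split_ifs with h
    · refine mul_nonneg ?_ (hQnn k)
      have : (t : ℚ) + 2 ≤ (k : ℚ) := by exact_mod_cast h
      linarith
    · exact le_refl 0
  have hW2v : ∑ k ∈ Finset.range (n + 1),
        (if t + 2 ≤ k then ((k : ℚ) - ((t : ℚ) + 1)) * Q k else 0)
      = 2 ^ (n - 1) * s
          * ((rho S * (n : ℚ) + ((n : ℚ) - 2 * ((t : ℚ) + 1)) * (1 - rho S)) - nei S) := by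
    have e1 : ∑ k ∈ Finset.range (n + 1),
          (if t + 2 ≤ k then ((k : ℚ) - ((t : ℚ) + 1)) * Q k else 0)
        = (∑ k ∈ Finset.range (n + 1), ((k : ℚ) - ((t : ℚ) + 1)) * Q k)
          + ((t : ℚ) + 1) * s ^ 2 := by
      rw [hW2]
      ring
    have hD' : D = nei S * s := by
      rw [hnei]
      field_simp
    have hrs : rho S * 2 ^ n = s := by
      rw [rho, hs]
      exact div_mul_cancel₀ _ (pow_ne_zero _ two_ne_zero)
    have h2n : (2 : ℚ) ^ n = 2 * 2 ^ (n - 1) := by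
      obtain ⟨m, rfl⟩ : ∃ m, n = m + 1 := ⟨n - 1, by omega⟩
      rw [pow_succ, Nat.add_sub_cancel]
      ring
    rw [e1, hW1, hD', ← hrs, h2n]
    ring
  constructor
  · intro hLHS i hi
    have hz : ∑ k ∈ Finset.range (n + 1),
        (if t + 2 ≤ k then ((k : ℚ) - ((t : ℚ) + 1)) * Q k else 0) = 0 := by
      rw [hW2v, hLHS]
      ring
    rw [hBQ i]
    rcases le_or_gt i n with hin | hin
    · have hz' := (Finset.sum_eq_zero_iff_of_nonneg hterm_nn).mp hz i
        (Finset.mem_range.mpr (by omega))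
      rw [if_pos hi] at hz'
      have hcoef : ((i : ℚ) - ((t : ℚ) + 1)) ≠ 0 := by
        have : (t : ℚ) + 2 ≤ (i : ℚ) := by exact_mod_cast hi
        intro hcon
        linarith
      have hQi : Q i = 0 := by
        rcases mul_eq_zero.mp hz' with h | h
        · exact absurd h hcoef
        · exact h
      rw [hQi, zero_div]
    · rw [hQhigh i hin, zero_div]
  · intro hB
    have hz : ∑ k ∈ Finset.range (n + 1),
        (if t + 2 ≤ k then ((k : ℚ) - ((t : ℚ) + 1)) * Q k else 0) = 0 := by
      refine Finset.sum_eq_zero fun k _ => ?_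
      split_ifs with hle
      · have h' : Q k / s ^ 2 = 0 := by
          rw [← hBQ k]
          exact hB k hle
        rcases div_eq_zero_iff.mp h' with h'' | h''
        · rw [h'', mul_zero]
        · exact absurd h'' (pow_ne_zero 2 hs0)
      · rfl
    rw [hW2v] at hz
    have hne : (2 : ℚ) ^ (n - 1) * s ≠ 0 :=
      mul_ne_zero (pow_ne_zero _ two_ne_zero) hs0
    rcases mul_eq_zero.mp hz with h' | h'
    · exact absurd h' hne
    · linarith
end
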